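/- Let G be a connected graph on n ≥ 3 vertices with Harary index H(G) = ∑_{i<j} 1/d(v_i,v_j), reciprocal transmissions RTr(v_i) = ∑_{j≠i} 1/d(v_i,v_j), and generalized reciprocal distance matrix RD_α(G) = α·RT(G) + (1-α)·RD(G) for α ∈ [0,1]. Then the spread S_{RD_α}(G) = λ₁(RD_α) - λₙ(RD_α) satisfies S_{RD_α}(G) ≤ (2α² ∑_i RTr(v_i)² + 2(1-α)² ∑_{i≠j} (1/d_{ij})² - (8/n)α² H(G)²)^{1/2}. -/

import Mathlib

open Matrix BigOperators Finset

variable {V : Type*} [Fintype V] [DecidableEq V]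

/-- Reciprocal distance (Harary) matrix. -/
noncomputable def RD (G : SimpleGraph V) : Matrix V V ℝ :=
  Matrix.of fun i j => if i = j then 0 else (1 : ℝ) / (G.dist i j)

/-- Reciprocal transmission of a vertex. -/
noncomputable def RTr (G : SimpleGraph V) (i : V) : ℝ := ∑ j, RD G i j

/-- Generalized reciprocal distance matrix. -/
noncomputable def RDa (α : ℝ) (G : SimpleGraph V) : Matrix V V ℝ :=
  α • Matrix.diagonal (RTr G) + (1 - α) • RD G

/-- Harary index. -/
noncomputable def harary (G : SimpleGraph V) : ℝ := (∑ i, RTr G i) / 2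

/-- Reciprocal transmission regular graph. -/
def TransRegular (G : SimpleGraph V) : Prop := ∀ i j : V, RTr G i = RTr G j

noncomputable def maxEig {M : Matrix V V ℝ} (hM : M.IsHermitian) : ℝ := ⨆ i, hM.eigenvalues i

noncomputable def minEig {M : Matrix V V ℝ} (hM : M.IsHermitian) : ℝ := ⨅ i, hM.eigenvalues i

/-- Spread of a real symmetric matrix. -/
noncomputable def spread {M : Matrix V V ℝ} (hM : M.IsHermitian) : ℝ := maxEig hM - minEig hM

lemma trace_eq_sum_eig {M : Matrix V V ℝ} (hM : M.IsHermitian) :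
    M.trace = ∑ i, hM.eigenvalues i := by
  conv_lhs => rw [hM.spectral_theorem, Unitary.conjStarAlgAut_apply]
  rw [Matrix.trace_mul_cycle, Unitary.coe_star_mul_self, one_mul, Matrix.trace_diagonal]
  simp [RCLike.ofReal]

lemma trace_sq_eq_sum_eig_sq {M : Matrix V V ℝ} (hM : M.IsHermitian) :
    (M * M).trace = ∑ i, hM.eigenvalues i ^ 2 := by
  conv_lhs => rw [hM.spectral_theorem, Unitary.conjStarAlgAut_apply]
  set U : Matrix V V ℝ := (hM.eigenvectorUnitary : Matrix V V ℝ)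
  set D : Matrix V V ℝ := Matrix.diagonal (RCLike.ofReal ∘ hM.eigenvalues)
  have h1 : star U * U = 1 := Unitary.coe_star_mul_self hM.eigenvectorUnitary
  calc (U * D * star U * (U * D * star U)).trace
      = (U * (D * D) * star U).trace := by
        rw [show U * D * star U * (U * D * star U) = U * ((D * (star U * U)) * D) * star U by
          simp only [Matrix.mul_assoc], h1]
        simp [Matrix.mul_assoc]
    _ = ∑ i, hM.eigenvalues i ^ 2 := by
        rw [Matrix.trace_mul_cycle, ← Matrix.mul_assoc, h1, Matrix.one_mul,
          Matrix.diagonal_mul_diagonal, Matrix.trace_diagonal]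
        simp [RCLike.ofReal, sq]

lemma spread_sq_le_aux {m : ℕ} (hm : 0 < m) (x : Fin m → ℝ) :
    ((⨆ i, x i) - ⨅ i, x i) ^ 2 ≤ 2 * ∑ i, x i ^ 2 - (2 / m) * (∑ i, x i) ^ 2 := by
  have : Nonempty (Fin m) := ⟨⟨0, hm⟩⟩
  have hm' : (m : ℝ) ≠ 0 := Nat.cast_ne_zero.mpr hm.ne'
  obtain ⟨p, hp⟩ := exists_eq_ciSup_of_finite (f := x)
  obtain ⟨q, hq⟩ := exists_eq_ciInf_of_finite (f := x)
  set μ : ℝ := (∑ i, x i) / m with hμ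
  have key : 2 * ∑ i, x i ^ 2 - (2 / m) * (∑ i, x i) ^ 2 = 2 * ∑ i, (x i - μ) ^ 2 := by
    have hexp : ∑ i, (x i - μ) ^ 2
        = ∑ i, x i ^ 2 - 2 * μ * ∑ i, x i + m * μ ^ 2 := by
      have : ∀ i : Fin m, (x i - μ) ^ 2 = x i ^ 2 - 2 * μ * x i + μ ^ 2 := fun i => by ring
      rw [Finset.sum_congr rfl fun i _ => this i]
      rw [Finset.sum_add_distrib, Finset.sum_sub_distrib, ← Finset.mul_sum,
        Finset.sum_const, Finset.card_univ, Fintype.card_fin, nsmul_eq_mul]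
    rw [hexp, hμ]
    field_simp
    ring
  rw [key, ← hp, ← hq]
  rcases eq_or_ne p q with h | h
  · have : x p - x q = 0 := by rw [h, sub_self]
    rw [this, zero_pow two_ne_zero]
    positivity
  · have hsub : ({p, q} : Finset (Fin m)) ⊆ Finset.univ := Finset.subset_univ _
    have hpair : (x p - μ) ^ 2 + (x q - μ) ^ 2 ≤ ∑ i, (x i - μ) ^ 2 := by
      have := Finset.sum_le_sum_of_subset_of_nonneg hsub
        (fun i _ _ => sq_nonneg (x i - μ))
      rwa [Finset.sum_pair h] at this
    nlinarith [sq_nonneg (x p + x q - 2 * μ)]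

/-- Upper bound for the `RD_α`-spread of a connected graph in terms of reciprocal
transmissions and the Harary index (Theorem 2.2). -/
theorem RDa_spread_upper {n : ℕ} (hn : 3 ≤ n) (G : SimpleGraph (Fin n)) (hG : G.Connected)
    (α : ℝ) (hα : α ∈ Set.Icc (0 : ℝ) 1) (hH : (RDa α G).IsHermitian) :
    spread hH ≤ Real.sqrt (2 * α ^ 2 * ∑ i, (RTr G i) ^ 2 +
      2 * (1 - α) ^ 2 * ∑ i, ∑ j ∈ Finset.univ.erase i, ((1 : ℝ) / (G.dist i j)) ^ 2 -
      (8 / n) * α ^ 2 * (harary G) ^ 2) := by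
  have hn0 : 0 < n := by omega
  have : Nonempty (Fin n) := ⟨⟨0, hn0⟩⟩
  set M := RDa α G with hM
  -- entries of M
  have hdiag : ∀ i, M i i = α * RTr G i := by
    intro i
    simp [hM, RDa, RD, Matrix.diagonal, Matrix.add_apply, Matrix.smul_apply]
  have hoff : ∀ i j, i ≠ j → M i j = (1 - α) * ((1 : ℝ) / (G.dist i j)) := by
    intro i j hij
    simp [hM, RDa, RD, Matrix.diagonal, Matrix.add_apply, Matrix.smul_apply, hij]
  -- trace
  have htr : M.trace = α * (2 * harary G) := by
    rw [Matrix.trace]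
    simp only [Matrix.diag_apply]
    rw [Finset.sum_congr rfl fun i _ => hdiag i, ← Finset.mul_sum, harary]
    ring
  -- trace of M*M
  have htr2 : (M * M).trace = α ^ 2 * ∑ i, (RTr G i) ^ 2
      + (1 - α) ^ 2 * ∑ i, ∑ j ∈ Finset.univ.erase i, ((1 : ℝ) / (G.dist i j)) ^ 2 := by
    rw [Matrix.trace]
    simp only [Matrix.diag_apply, Matrix.mul_apply]
    have hrow : ∀ i : Fin n, ∑ j, M i j * M j i
        = α ^ 2 * (RTr G i) ^ 2
          + (1 - α) ^ 2 * ∑ j ∈ Finset.univ.erase i, ((1 : ℝ) / (G.dist i j)) ^ 2 := by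
      intro i
      rw [← Finset.add_sum_erase _ _ (Finset.mem_univ i), hdiag i]
      have : ∀ j ∈ Finset.univ.erase i, M i j * M j i
          = (1 - α) ^ 2 * ((1 : ℝ) / (G.dist i j)) ^ 2 := by
        intro j hj
        have hji : j ≠ i := Finset.ne_of_mem_erase hj
        rw [hoff i j hji.symm, hoff j i hji, show G.dist j i = G.dist i j from SimpleGraph.dist_comm]
        ring
      rw [Finset.sum_congr rfl this, ← Finset.mul_sum]
      ring
    rw [Finset.sum_congr rfl fun i _ => hrow i, Finset.sum_add_distrib, ← Finset.mul_sum,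
      ← Finset.mul_sum]
  -- spread nonneg
  have hspread0 : 0 ≤ spread hH := by
    have h1 : minEig hH ≤ hH.eigenvalues (Classical.arbitrary _) :=
      ciInf_le (Set.Finite.bddBelow (Set.finite_range _)) _
    have h2 : hH.eigenvalues (Classical.arbitrary _) ≤ maxEig hH :=
      le_ciSup (Set.Finite.bddAbove (Set.finite_range _)) _
    simp only [spread]
    linarith
  rw [show spread hH = Real.sqrt ((spread hH) ^ 2) by
    rw [Real.sqrt_sq hspread0]]
  apply Real.sqrt_le_sqrt
  have hkey := spread_sq_le_aux hn0 hH.eigenvalues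
  rw [← trace_eq_sum_eig hH, ← trace_sq_eq_sum_eig_sq hH, htr, htr2] at hkey
  have heq : 2 * (α ^ 2 * ∑ i, (RTr G i) ^ 2
      + (1 - α) ^ 2 * ∑ i, ∑ j ∈ Finset.univ.erase i, ((1 : ℝ) / (G.dist i j)) ^ 2)
      - (2 / n) * (α * (2 * harary G)) ^ 2
      = 2 * α ^ 2 * ∑ i, (RTr G i) ^ 2 +
        2 * (1 - α) ^ 2 * ∑ i, ∑ j ∈ Finset.univ.erase i, ((1 : ℝ) / (G.dist i j)) ^ 2 -
        (8 / n) * α ^ 2 * (harary G) ^ 2 := by ring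
  calc (spread hH) ^ 2 = ((⨆ i, hH.eigenvalues i) - ⨅ i, hH.eigenvalues i) ^ 2 := rfl
    _ ≤ _ := hkey
    _ = _ := heq
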